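/- Let z_1, …, z_T ∈ ℝ^{d} with ‖z_t‖² ≤ λ, and V_t = λI + Σ_{s<t} z_s z_s^T. Then Σ_{t=1}^T ‖z_t‖_{V_t^{-1}} ≤ sqrt(2 T d log(T+1)), where ‖z‖_A = sqrt(z^T A z). -/

import Mathlib

open Matrix Finset

lemma ep_quad_vmv {d : ℕ} (v x : Fin d → ℝ) :
    x ⬝ᵥ (vecMulVec v v) *ᵥ x = (v ⬝ᵥ x) ^ 2 := by
  simp only [dotProduct, mulVec, vecMulVec_apply, pow_two, Finset.sum_mul_sum]
  rw [Finset.sum_comm]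
  refine Finset.sum_congr rfl fun i _ => ?_
  rw [Finset.mul_sum]
  exact Finset.sum_congr rfl fun j _ => by ring

lemma ep_psd_vmv {d : ℕ} (v : Fin d → ℝ) : (vecMulVec v v).PosSemidef := by
  refine .of_dotProduct_mulVec_nonneg ?_ ?_
  · ext i j
    simp [conjTranspose_apply, vecMulVec_apply, mul_comm]
  · intro x
    rw [star_trivial, ep_quad_vmv]
    positivity

lemma ep_psd_sum {d : ℕ} {ι : Type*} (s : Finset ι) (f : ι → Matrix (Fin d) (Fin d) ℝ)
    (hf : ∀ i ∈ s, (f i).PosSemidef) : (∑ i ∈ s, f i).PosSemidef :=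
  Finset.sum_induction f _ (fun _ _ ha hb => ha.add hb) Matrix.PosSemidef.zero hf

lemma ep_posdef {d : ℕ} {lam : ℝ} (hlam : 0 < lam) {S : Matrix (Fin d) (Fin d) ℝ}
    (hS : S.PosSemidef) : (lam • (1 : Matrix (Fin d) (Fin d) ℝ) + S).PosDef := by
  have h1 : (lam • (1 : Matrix (Fin d) (Fin d) ℝ)).PosDef := by
    rw [smul_one_eq_diagonal]
    exact posDef_diagonal_iff.mpr fun _ => hlam
  exact h1.add_posSemidef hS

lemma ep_quad_inv_le_one {d : ℕ} {lam : ℝ} (hlam : 0 < lam) {S : Matrix (Fin d) (Fin d) ℝ}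
    (hS : S.PosSemidef) {v : Fin d → ℝ} (hv : v ⬝ᵥ v ≤ lam) :
    v ⬝ᵥ (lam • (1 : Matrix (Fin d) (Fin d) ℝ) + S)⁻¹ *ᵥ v ≤ 1 := by
  set A := lam • (1 : Matrix (Fin d) (Fin d) ℝ) + S with hA
  have hApd : A.PosDef := ep_posdef hlam hS
  set w : Fin d → ℝ := A⁻¹ *ᵥ v with hw
  have hAw : A *ᵥ w = v := by
    rw [hw, mulVec_mulVec, Matrix.mul_nonsing_inv _ (isUnit_iff_ne_zero.mpr hApd.det_pos.ne'),
      one_mulVec]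
  set q : ℝ := v ⬝ᵥ A⁻¹ *ᵥ v with hqdef
  have hq0 : 0 ≤ q := by
    have := hApd.inv.posSemidef.dotProduct_mulVec_nonneg v
    rwa [star_trivial] at this
  have h1 : q = w ⬝ᵥ A *ᵥ w := by rw [hAw, dotProduct_comm, hqdef, hw]
  have h2 : lam * (w ⬝ᵥ w) ≤ q := by
    have hSw : 0 ≤ w ⬝ᵥ S *ᵥ w := by have := hS.dotProduct_mulVec_nonneg w; rwa [star_trivial] at this
    rw [h1, hA, add_mulVec, smul_mulVec, one_mulVec, dotProduct_add, dotProduct_smul,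
      smul_eq_mul]
    linarith
  have h3 : q ^ 2 ≤ (v ⬝ᵥ v) * (w ⬝ᵥ w) := by
    have hq : q = v ⬝ᵥ w := by rw [hqdef, hw]
    have := Finset.sum_mul_sq_le_sq_mul_sq Finset.univ v w
    simpa [hq, dotProduct, pow_two] using this
  have hww : 0 ≤ w ⬝ᵥ w := by
    simpa [dotProduct, pow_two] using Finset.sum_nonneg
      (fun i (_ : i ∈ Finset.univ) => mul_self_nonneg (w i))
  have h4 : q ^ 2 ≤ q :=
    h3.trans ((mul_le_mul_of_nonneg_right hv hww).trans h2)
  nlinarith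

lemma ep_det_le_pow {d : ℕ} {A : Matrix (Fin d) (Fin d) ℝ} (hA : A.PosSemidef) {c : ℝ}
    (hc : 0 ≤ c) (h : ∀ x, x ⬝ᵥ A *ᵥ x ≤ c * (x ⬝ᵥ x)) : A.det ≤ c ^ d := by
  have hdet := hA.1.det_eq_prod_eigenvalues
  have hb : ∀ i, hA.1.eigenvalues i ≤ c := by
    intro i
    set v : Fin d → ℝ := ⇑(hA.1.eigenvectorBasis i) with hvdef
    have hmv : A *ᵥ v = hA.1.eigenvalues i • v := hA.1.mulVec_eigenvectorBasis i
    have hvne : v ≠ 0 := by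
      intro h0
      exact hA.1.eigenvectorBasis.orthonormal.ne_zero i (by ext j; exact congrFun h0 j)
    have hvv : 0 < v ⬝ᵥ v := by
      have := dotProduct_star_self_pos_iff.mpr hvne
      rwa [star_trivial] at this
    have := h v
    rw [hmv, dotProduct_smul, smul_eq_mul] at this
    exact le_of_mul_le_mul_right (by linarith [this]) hvv
  calc A.det = ∏ i, hA.1.eigenvalues i := by rw [hdet]; norm_num
    _ ≤ ∏ _i : Fin d, c := Finset.prod_le_prod (fun i _ => hA.eigenvalues_nonneg i)
        (fun i _ => hb i)
    _ = c ^ d := by simp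

lemma ep_le_two_log {x : ℝ} (h0 : 0 ≤ x) (h1 : x ≤ 1) : x ≤ 2 * Real.log (1 + x) := by
  have hx : (0:ℝ) < 1 + x := by linarith
  have h2 : Real.log (1 / (1 + x)) ≤ 1 / (1 + x) - 1 :=
    Real.log_le_sub_one_of_pos (by positivity)
  rw [Real.log_div one_ne_zero hx.ne', Real.log_one] at h2
  have h3 : x / (1 + x) ≤ Real.log (1 + x) := by
    have : 1 - 1 / (1 + x) = x / (1 + x) := by field_simp; ring
    linarith
  have h4 : x ≤ 2 * (x / (1 + x))  := by
    rw [mul_div_assoc', le_div_iff₀ hx]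
    nlinarith
  linarith

lemma ep_cs {d : ℕ} (v x : Fin d → ℝ) : (v ⬝ᵥ x) ^ 2 ≤ (v ⬝ᵥ v) * (x ⬝ᵥ x) := by
  have := Finset.sum_mul_sq_le_sq_mul_sq Finset.univ v x
  simpa [dotProduct, pow_two] using this

lemma ep_quad_sum {d : ℕ} {ι : Type*} [DecidableEq ι] (F : Finset ι) (v : ι → Fin d → ℝ)
    (x : Fin d → ℝ) :
    x ⬝ᵥ (∑ s ∈ F, vecMulVec (v s) (v s)) *ᵥ x = ∑ s ∈ F, (v s ⬝ᵥ x) ^ 2 := by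
  induction F using Finset.induction with
  | empty => simp
  | insert _ _ h ih =>
      rw [Finset.sum_insert h, Finset.sum_insert h, add_mulVec, dotProduct_add, ep_quad_vmv, ih]

theorem elliptical_potential {d T : ℕ} (lam : ℝ) (hlam : 0 < lam)
    (z : Fin T → Fin d → ℝ) (hz : ∀ t, z t ⬝ᵥ z t ≤ lam)
    (V : Fin T → Matrix (Fin d) (Fin d) ℝ)
    (hV : ∀ t, V t = lam • (1 : Matrix (Fin d) (Fin d) ℝ) +
      ∑ s ∈ Finset.univ.filter (fun s => s < t), vecMulVec (z s) (z s)) :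
    ∑ t, Real.sqrt (z t ⬝ᵥ (V t)⁻¹.mulVec (z t)) ≤
      Real.sqrt (2 * T * d * Real.log (T + 1)) := by
  classical
  set W : ℕ → Matrix (Fin d) (Fin d) ℝ := fun n =>
    lam • (1 : Matrix (Fin d) (Fin d) ℝ) +
      ∑ s ∈ Finset.univ.filter (fun s : Fin T => (s : ℕ) < n), vecMulVec (z s) (z s) with hWdef
  have hSpsd : ∀ n : ℕ,
      (∑ s ∈ Finset.univ.filter (fun s : Fin T => (s : ℕ) < n),
        vecMulVec (z s) (z s)).PosSemidef :=
    fun n => ep_psd_sum _ _ (fun i _ => ep_psd_vmv (z i))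
  have hWpd : ∀ n, (W n).PosDef := fun n => ep_posdef hlam (hSpsd n)
  have hVW : ∀ t : Fin T, V t = W t.val := by
    intro t
    rw [hV t, hWdef]
    congr 1
  set q : Fin T → ℝ := fun t => z t ⬝ᵥ (W t.val)⁻¹ *ᵥ z t with hqdef
  have hq0 : ∀ t, 0 ≤ q t := by
    intro t
    have := (hWpd t.val).inv.posSemidef.dotProduct_mulVec_nonneg (z t)
    rwa [star_trivial] at this
  have hq1 : ∀ t, q t ≤ 1 := fun t => ep_quad_inv_le_one hlam (hSpsd t.val) (hz t)
  have hstep : ∀ t : Fin T, W (t.val + 1) = W t.val + vecMulVec (z t) (z t) := by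
    intro t
    have hfil : Finset.univ.filter (fun s : Fin T => (s : ℕ) < t.val + 1)
        = insert t (Finset.univ.filter (fun s : Fin T => (s : ℕ) < t.val)) := by
      ext s
      simp only [Finset.mem_filter, Finset.mem_insert, Finset.mem_univ, true_and]
      constructor
      · intro h
        rcases Nat.lt_succ_iff_lt_or_eq.mp h with h | h
        · exact Or.inr h
        · exact Or.inl (Fin.ext h)
      · rintro (rfl | h)
        · exact Nat.lt_succ_self _
        · exact h.trans (Nat.lt_succ_self _)
    simp only [hWdef, hfil]
    rw [Finset.sum_insert (by simp)]
    abel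
  have hdetpos : ∀ n, 0 < (W n).det := fun n => (hWpd n).det_pos
  have hdetstep : ∀ t : Fin T, (W (t.val + 1)).det = (W t.val).det * (1 + q t) := by
    intro t
    rw [hstep t, vecMulVec_eq Unit,
      det_add_replicateCol_mul_replicateRow (isUnit_iff_ne_zero.mpr (hdetpos t.val).ne') _ _]
    congr 1
    rw [Matrix.mul_assoc, ← replicateCol_mulVec, det_unique]
    simp [Matrix.add_apply, Matrix.one_apply, replicateRow_mul_replicateCol_apply, hqdef]
  set f : ℕ → ℝ := fun n => Real.log (W n).det with hfdef
  have hlogstep : ∀ t : Fin T, Real.log (1 + q t) = f (t.val + 1) - f t.val := by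
    intro t
    have h1q : (0:ℝ) < 1 + q t := by linarith [hq0 t]
    rw [hfdef]
    simp only
    rw [hdetstep t, Real.log_mul (hdetpos t.val).ne' h1q.ne']
    ring
  have htel : ∑ t : Fin T, Real.log (1 + q t) = f T - f 0 := by
    calc ∑ t : Fin T, Real.log (1 + q t)
        = ∑ t : Fin T, (f (t.val + 1) - f t.val) :=
          Finset.sum_congr rfl fun t _ => hlogstep t
      _ = ∑ n ∈ Finset.range T, (f (n + 1) - f n) :=
          Fin.sum_univ_eq_sum_range (fun n => f (n + 1) - f n) T
      _ = f T - f 0 := Finset.sum_range_sub f T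
  have hf0 : f 0 = d * Real.log lam := by
    have hW0 : W 0 = lam • (1 : Matrix (Fin d) (Fin d) ℝ) := by
      rw [hWdef]
      simp
    rw [hfdef]
    simp only [hW0]
    rw [det_smul, det_one, mul_one, Real.log_pow, Fintype.card_fin]
  have hTpos : (0:ℝ) < (T:ℝ) + 1 := by positivity
  have hquadW : ∀ x : Fin d → ℝ, x ⬝ᵥ (W T) *ᵥ x ≤ (lam * ((T:ℝ) + 1)) * (x ⬝ᵥ x) := by
    intro x
    have hxx : 0 ≤ x ⬝ᵥ x := by
      simpa [dotProduct, pow_two] using Finset.sum_nonneg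
        (fun i (_ : i ∈ Finset.univ) => mul_self_nonneg (x i))
    rw [hWdef]
    simp only [add_mulVec, smul_mulVec, one_mulVec, dotProduct_add, dotProduct_smul,
      smul_eq_mul]
    rw [ep_quad_sum]
    have hcard : ((Finset.univ.filter (fun s : Fin T => (s : ℕ) < (T:ℕ))).card : ℝ) ≤ T := by
      exact_mod_cast (Finset.card_filter_le _ _).trans_eq (by simp)
    have hsum : ∑ s ∈ Finset.univ.filter (fun s : Fin T => (s : ℕ) < (T:ℕ)), (z s ⬝ᵥ x) ^ 2
        ≤ ((Finset.univ.filter (fun s : Fin T => (s : ℕ) < (T:ℕ))).card : ℝ) * (lam * (x ⬝ᵥ x)) := by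
      calc ∑ s ∈ Finset.univ.filter (fun s : Fin T => (s : ℕ) < (T:ℕ)), (z s ⬝ᵥ x) ^ 2
          ≤ ∑ _s ∈ Finset.univ.filter (fun s : Fin T => (s : ℕ) < (T:ℕ)), lam * (x ⬝ᵥ x) :=
            Finset.sum_le_sum fun s _ =>
              (ep_cs (z s) x).trans (mul_le_mul_of_nonneg_right (hz s) hxx)
        _ = _ := by rw [Finset.sum_const, nsmul_eq_mul]
    have := mul_le_mul_of_nonneg_right hcard (mul_nonneg hlam.le hxx)
    nlinarith [hsum]
  have hfT : f T ≤ d * Real.log (lam * ((T:ℝ) + 1)) := by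
    have hdet : (W T).det ≤ (lam * ((T:ℝ) + 1)) ^ d :=
      ep_det_le_pow (hWpd T).posSemidef (by positivity) hquadW
    rw [hfdef]
    calc Real.log (W (T:ℕ)).det ≤ Real.log ((lam * ((T:ℝ) + 1)) ^ d) :=
        Real.log_le_log (hdetpos T) hdet
      _ = d * Real.log (lam * ((T:ℝ) + 1)) := by rw [Real.log_pow]
  have hdiff : f T - f 0 ≤ d * Real.log ((T:ℝ) + 1) := by
    have hlm : Real.log (lam * ((T:ℝ) + 1)) = Real.log lam + Real.log ((T:ℝ) + 1) :=
      Real.log_mul hlam.ne' hTpos.ne'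
    rw [hlm] at hfT
    rw [hf0]
    nlinarith [hfT]
  have hsumq : ∑ t : Fin T, q t ≤ 2 * d * Real.log ((T:ℝ) + 1) := by
    have h1 : ∑ t : Fin T, q t ≤ ∑ t : Fin T, 2 * Real.log (1 + q t) :=
      Finset.sum_le_sum fun t _ => ep_le_two_log (hq0 t) (hq1 t)
    rw [← Finset.mul_sum, htel] at h1
    nlinarith [hdiff]
  have hgoal : ∑ t, Real.sqrt (z t ⬝ᵥ (V t)⁻¹.mulVec (z t)) = ∑ t, Real.sqrt (q t) :=
    Finset.sum_congr rfl fun t _ => by rw [hVW t]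
  rw [hgoal]
  have hs0 : 0 ≤ ∑ t, Real.sqrt (q t) := Finset.sum_nonneg fun t _ => Real.sqrt_nonneg _
  have hsq : (∑ t, Real.sqrt (q t)) ^ 2 ≤ 2 * T * d * Real.log ((T:ℝ) + 1) := by
    calc (∑ t, Real.sqrt (q t)) ^ 2
        ≤ ((Finset.univ : Finset (Fin T)).card : ℝ) * ∑ t, Real.sqrt (q t) ^ 2 :=
          sq_sum_le_card_mul_sum_sq
      _ = T * ∑ t, q t := by
          rw [Finset.card_univ, Fintype.card_fin]
          congr 1
          exact Finset.sum_congr rfl fun t _ => Real.sq_sqrt (hq0 t)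
      _ ≤ T * (2 * d * Real.log ((T:ℝ) + 1)) :=
          mul_le_mul_of_nonneg_left hsumq (by positivity)
      _ = 2 * T * d * Real.log ((T:ℝ) + 1) := by ring
  calc ∑ t, Real.sqrt (q t) = Real.sqrt ((∑ t, Real.sqrt (q t)) ^ 2) :=
      (Real.sqrt_sq hs0).symm
    _ ≤ Real.sqrt (2 * T * d * Real.log ((T:ℝ) + 1)) := Real.sqrt_le_sqrt hsq
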